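/- Under the stationary product measure Q on {0,1}^ℤ with Q(ω_t = 1) = 1/2, the k-block containing the origin satisfies: for every finite interval J of positive integers, Q(diam(B^k(0)) ∈ J) ≤ (1/2)^{ℓ_k} · (max J) · P(T^k ∈ J), where T^k is the first-occurrence time of the word I_k in an i.i.d. Bernoulli(1/2) sequence. -/

import Mathlib

open MeasureTheory

/-- First time `j ≥ ℓ` (in an ℕ-indexed sequence) such that the window
`(j-ℓ+1,…,j)` equals the word `I_ℓ` of `ℓ-1` ones followed by a zero. -/
noncomputable def firstOcc (ℓ : ℕ) (e : ℕ → Bool) : ℕ :=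
  sInf {j | ℓ ≤ j ∧ ∀ i < ℓ, e (j - ℓ + 1 + i) = decide (i < ℓ - 1)}

/-- `b` is the right endpoint of an occurrence of the word `I_ℓ` (of `ℓ-1` ones
followed by a zero) in the environment `e : ℤ → Bool`, i.e. `I_ℓ` is seen
on `[b-ℓ+1, b]`. -/
def occEnd (ℓ : ℕ) (e : ℤ → Bool) (b : ℤ) : Prop :=
  ∀ i < ℓ, e (b - ℓ + 1 + i) = decide (i < ℓ - 1)

/-- Size-biasing bound for the diameter of the `k`-block containing the origin:
`Q(diam(B^k(0)) ∈ J) ≤ (1/2)^{ℓ} ⋅ (max J) ⋅ P(T^k ∈ J)`, where `T^k` is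
the first-occurrence time of `I_ℓ` in an i.i.d. Bernoulli(1/2) sequence. -/
def patExt {I : Type} [DecidableEq I] (s : Finset I) (f : {x // x ∈ s} → Bool) : I → Bool :=
  fun i => if h : i ∈ s then f ⟨i, h⟩ else false

open Classical in
noncomputable def patCount {I : Type} [DecidableEq I] (s : Finset I) (P : (I → Bool) → Prop) : ℕ :=
  (Finset.univ.filter (fun f : {x // x ∈ s} → Bool => P (patExt s f))).card

def Pn (ℓ d : ℕ) (e : ℕ → Bool) : Prop :=
  (∀ i < ℓ, e (d - ℓ + 1 + i) = decide (i < ℓ - 1)) ∧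
    ∀ j, ℓ ≤ j → j < d → ¬ ∀ i < ℓ, e (j - ℓ + 1 + i) = decide (i < ℓ - 1)

def Qz (ℓ : ℕ) (b : ℤ) (d : ℕ) (e : ℤ → Bool) : Prop :=
  occEnd ℓ e b ∧ occEnd ℓ e (b + d) ∧ ∀ c, b < c → c < b + d → ¬ occEnd ℓ e c

lemma overlap {ℓ : ℕ} (hℓ : 1 ≤ ℓ) {e : ℤ → Bool} {b c : ℤ}
    (hb : occEnd ℓ e b) (hc : occEnd ℓ e c) (h1 : b < c) (h2 : c < b + ℓ) : False := by
  have hb' := hb (ℓ - 1) (by omega)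
  have hc' := hc (b + ℓ - 1 - c).toNat (by omega)
  have e1 : b - ℓ + 1 + ((ℓ - 1 : ℕ) : ℤ) = b := by omega
  have e2 : c - ℓ + 1 + (((b + ℓ - 1 - c).toNat : ℕ) : ℤ) = b := by omega
  rw [e1] at hb'
  rw [e2] at hc'
  rw [hb'] at hc'
  have d1 : ¬ (ℓ - 1 < ℓ - 1) := by omega
  have d2 : (b + ℓ - 1 - c).toNat < ℓ - 1 := by omega
  simp [d1, d2] at hc'

lemma win_corr {ℓ : ℕ} {b : ℤ} {d : ℕ} {eZ : ℤ → Bool} {eN : ℕ → Bool}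
    (compat : ∀ m : ℕ, 1 ≤ m → m ≤ d → eZ (b + m) = eN m)
    {j : ℕ} (hj : ℓ ≤ j) (hjd : j ≤ d) :
    occEnd ℓ eZ (b + j) ↔ ∀ i < ℓ, eN (j - ℓ + 1 + i) = decide (i < ℓ - 1) := by
  unfold occEnd
  refine forall₂_congr fun i hi => ?_
  have h1 : (b + (j:ℤ)) - ℓ + 1 + i = b + ((j - ℓ + 1 + i : ℕ) : ℤ) := by omega
  rw [h1, compat _ (by omega) (by omega)]

lemma occEnd_of_agree {ℓ : ℕ} {f g : ℤ → Bool} {c : ℤ}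
    (h : ∀ i : ℕ, i < ℓ → f (c - ℓ + 1 + i) = g (c - ℓ + 1 + i))
    (hf : occEnd ℓ f c) : occEnd ℓ g c :=
  fun i hi => (h i hi) ▸ hf i hi

lemma Qz_of_agree {ℓ : ℕ} (hℓ : 1 ≤ ℓ) {b : ℤ} {d : ℕ} (f g : ℤ → Bool)
    (hag : ∀ i ∈ Finset.Icc (b - ℓ + 1) (b + d), f i = g i) (hQ : Qz ℓ b d f) :
    Qz ℓ b d g := by
  obtain ⟨h1, h2, h3⟩ := hQ
  have hmem : ∀ c : ℤ, b ≤ c → c ≤ b + d → ∀ i : ℕ, i < ℓ →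
      (c - ℓ + 1 + i) ∈ Finset.Icc (b - ℓ + 1) (b + d) := by
    intro c hc1 hc2 i hi
    rw [Finset.mem_Icc]
    omega
  refine ⟨occEnd_of_agree (fun i hi => hag _ (hmem b le_rfl (by omega) i hi)) h1,
    occEnd_of_agree (fun i hi => hag _ (hmem (b + d) (by omega) le_rfl i hi)) h2,
    fun c hc1 hc2 hocc => h3 c hc1 hc2 ?_⟩
  exact occEnd_of_agree (fun i hi => (hag _ (hmem c (by omega) (by omega) i hi)).symm) hocc

lemma Pn_of_agree {ℓ d : ℕ} (hℓ : 1 ≤ ℓ) (hd : ℓ ≤ d) (f g : ℕ → Bool)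
    (hag : ∀ i ∈ Finset.Icc 1 d, f i = g i) (hP : Pn ℓ d f) : Pn ℓ d g := by
  obtain ⟨h1, h2⟩ := hP
  have hmem : ∀ j : ℕ, ℓ ≤ j → j ≤ d → ∀ i : ℕ, i < ℓ →
      (j - ℓ + 1 + i) ∈ Finset.Icc 1 d := by
    intro j hj1 hj2 i hi
    rw [Finset.mem_Icc]
    omega
  constructor
  · intro i hi
    rw [← hag _ (hmem d hd le_rfl i hi)]
    exact h1 i hi
  · intro j hj1 hj2 hw
    refine h2 j hj1 (by omega) fun i hi => ?_
    rw [hag _ (hmem j hj1 (by omega) i hi)]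
    exact hw i hi

noncomputable def fwdMap (ℓ : ℕ) (b : ℤ) (d : ℕ)
    (f : {x // x ∈ Finset.Icc (b - ℓ + 1) (b + d)} → Bool) :
    {x // x ∈ Finset.Icc (1 : ℕ) d} → Bool :=
  fun j => patExt _ f (b + (j.1 : ℤ))

def bwdMap (ℓ : ℕ) (b : ℤ) (d : ℕ)
    (g : {x // x ∈ Finset.Icc (1 : ℕ) d} → Bool) :
    {x // x ∈ Finset.Icc (b - ℓ + 1) (b + d)} → Bool :=
  fun i => if (i.1 : ℤ) ≤ b then decide ((i.1 : ℤ) < b)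
    else patExt _ g ((i.1 : ℤ) - b).toNat

lemma compatF {ℓ : ℕ} (hℓ : 1 ≤ ℓ) {b : ℤ} {d : ℕ}
    (f : {x // x ∈ Finset.Icc (b - ℓ + 1) (b + d)} → Bool)
    (m : ℕ) (h1 : 1 ≤ m) (h2 : m ≤ d) :
    patExt _ f (b + (m : ℤ)) = patExt _ (fwdMap ℓ b d f) m := by
  have hmN : m ∈ Finset.Icc (1 : ℕ) d := by rw [Finset.mem_Icc]; omega
  rw [show patExt _ (fwdMap ℓ b d f) m = fwdMap ℓ b d f ⟨m, hmN⟩ from dif_pos hmN]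
  rfl

lemma compatB {ℓ : ℕ} (hℓ : 1 ≤ ℓ) {b : ℤ} {d : ℕ}
    (g : {x // x ∈ Finset.Icc (1 : ℕ) d} → Bool)
    (m : ℕ) (h1 : 1 ≤ m) (h2 : m ≤ d) :
    patExt _ (bwdMap ℓ b d g) (b + (m : ℤ)) = patExt _ g m := by
  have hmZ : b + (m : ℤ) ∈ Finset.Icc (b - ℓ + 1) (b + d) := by rw [Finset.mem_Icc]; omega
  rw [show patExt _ (bwdMap ℓ b d g) (b + (m : ℤ)) = bwdMap ℓ b d g ⟨b + (m : ℤ), hmZ⟩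
    from dif_pos hmZ]
  unfold bwdMap
  rw [if_neg (by omega : ¬ (b + (m : ℤ) ≤ b))]
  congr 1
  show (b + (m : ℤ) - b).toNat = m
  omega

lemma fwd_pres {ℓ : ℕ} (hℓ : 1 ≤ ℓ) {b : ℤ} {d : ℕ} (hd : ℓ ≤ d)
    (f : {x // x ∈ Finset.Icc (b - ℓ + 1) (b + d)} → Bool)
    (hQ : Qz ℓ b d (patExt _ f)) : Pn ℓ d (patExt _ (fwdMap ℓ b d f)) := by
  obtain ⟨h1, h2, h3⟩ := hQ
  have compat := compatF hℓ f
  constructor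
  · exact (win_corr compat hd le_rfl).mp h2
  · intro j hj1 hj2 hw
    have hocc : occEnd ℓ (patExt _ f) (b + j) := (win_corr compat hj1 (by omega)).mpr hw
    exact h3 (b + j) (by omega) (by omega) hocc

lemma bwd_word {ℓ : ℕ} (hℓ : 1 ≤ ℓ) {b : ℤ} {d : ℕ}
    (g : {x // x ∈ Finset.Icc (1 : ℕ) d} → Bool) :
    occEnd ℓ (patExt _ (bwdMap ℓ b d g)) b := by
  intro i hi
  have hmZ : b - ℓ + 1 + (i : ℤ) ∈ Finset.Icc (b - ℓ + 1) (b + d) := by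
    rw [Finset.mem_Icc]; omega
  rw [show patExt _ (bwdMap ℓ b d g) (b - ℓ + 1 + (i : ℤ))
      = bwdMap ℓ b d g ⟨b - ℓ + 1 + (i : ℤ), hmZ⟩ from dif_pos hmZ]
  unfold bwdMap
  rw [if_pos (show ((⟨b - ℓ + 1 + (i : ℤ), hmZ⟩ : {x // x ∈ _}).1 : ℤ) ≤ b by
    show b - ℓ + 1 + (i : ℤ) ≤ b; omega)]
  show decide (b - ℓ + 1 + (i : ℤ) < b) = decide (i < ℓ - 1)
  rw [decide_eq_decide]
  omega

lemma bwd_pres {ℓ : ℕ} (hℓ : 1 ≤ ℓ) {b : ℤ} {d : ℕ} (hd : ℓ ≤ d)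
    (g : {x // x ∈ Finset.Icc (1 : ℕ) d} → Bool)
    (hP : Pn ℓ d (patExt _ g)) : Qz ℓ b d (patExt _ (bwdMap ℓ b d g)) := by
  obtain ⟨h1, h2⟩ := hP
  have compat := fun m h1 h2 => compatB hℓ (b := b) g m h1 h2
  refine ⟨bwd_word hℓ g, (win_corr compat hd le_rfl).mpr h1, ?_⟩
  intro c hc1 hc2 hocc
  set j : ℕ := (c - b).toNat with hj
  have hcj : c = b + (j : ℤ) := by omega
  rw [hcj] at hocc
  by_cases hjℓ : j < ℓ
  · exact overlap hℓ (bwd_word hℓ g) hocc (by omega) (by omega)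
  · exact h2 j (by omega) (by omega) ((win_corr compat (by omega) (by omega)).mp hocc)

lemma left_inv {ℓ : ℕ} (hℓ : 1 ≤ ℓ) {b : ℤ} {d : ℕ} (hd : ℓ ≤ d)
    (f : {x // x ∈ Finset.Icc (b - ℓ + 1) (b + d)} → Bool)
    (hQ : Qz ℓ b d (patExt _ f)) : bwdMap ℓ b d (fwdMap ℓ b d f) = f := by
  funext i
  obtain ⟨h1, _, _⟩ := hQ
  have hiZ : b - ℓ + 1 ≤ (i.1 : ℤ) ∧ (i.1 : ℤ) ≤ b + d := Finset.mem_Icc.mp i.2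
  unfold bwdMap
  by_cases hib : (i.1 : ℤ) ≤ b
  · rw [if_pos hib]
    set i' : ℕ := ((i.1 : ℤ) - (b - ℓ + 1)).toNat with hi'
    have hocc := h1 i' (by omega)
    have harg : b - ℓ + 1 + (i' : ℤ) = i.1 := by omega
    rw [harg] at hocc
    rw [show patExt _ f (i.1 : ℤ) = f i from dif_pos i.2] at hocc
    rw [hocc, decide_eq_decide.mpr (show (i' < ℓ - 1) ↔ ((i.1 : ℤ) < b) by omega)]
  · rw [if_neg hib]
    set m : ℕ := ((i.1 : ℤ) - b).toNat with hm
    have := (compatF hℓ f m (by omega) (by omega)).symm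
    rw [show b + (m : ℤ) = i.1 by omega] at this
    rw [this]
    exact dif_pos i.2

lemma right_inv {ℓ : ℕ} (hℓ : 1 ≤ ℓ) {b : ℤ} {d : ℕ}
    (g : {x // x ∈ Finset.Icc (1 : ℕ) d} → Bool) :
    fwdMap ℓ b d (bwdMap ℓ b d g) = g := by
  funext j
  have hjN : 1 ≤ j.1 ∧ j.1 ≤ d := Finset.mem_Icc.mp j.2
  show patExt _ (bwdMap ℓ b d g) (b + (j.1 : ℤ)) = g j
  rw [compatB hℓ g j.1 hjN.1 hjN.2]
  exact dif_pos j.2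

lemma patCount_corr {ℓ : ℕ} (hℓ : 1 ≤ ℓ) (b : ℤ) {d : ℕ} (hd : ℓ ≤ d) :
    patCount (Finset.Icc (b - ℓ + 1) (b + d)) (Qz ℓ b d)
      = patCount (Finset.Icc (1 : ℕ) d) (Pn ℓ d) := by
  classical
  unfold patCount
  refine Finset.card_nbij' (fwdMap ℓ b d) (bwdMap ℓ b d) ?_ ?_ ?_ ?_
  · intro f hf
    simp only [Finset.mem_coe, Finset.mem_filter, Finset.mem_univ, true_and] at hf ⊢
    exact fwd_pres hℓ hd f hf
  · intro g hg
    simp only [Finset.mem_coe, Finset.mem_filter, Finset.mem_univ, true_and] at hg ⊢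
    exact bwd_pres hℓ hd g hg
  · intro f hf
    simp only [Finset.mem_coe, Finset.mem_filter, Finset.mem_univ, true_and] at hf
    exact left_inv hℓ hd f hf
  · intro g hg
    exact right_inv hℓ g

lemma cyl_count' {I Ω : Type} [DecidableEq I] [MeasurableSpace Ω] (μ : Measure Ω)
    (X : I → Ω → Bool) (hX : ∀ i, Measurable (X i))
    (hiid : ∀ (s : Finset I) (b : I → Bool),
      μ {ω | ∀ i ∈ s, X i ω = b i} = (1 / 2 : ENNReal) ^ s.card)
    (s : Finset I) (P : (I → Bool) → Prop)
    (hP : ∀ f g : I → Bool, (∀ i ∈ s, f i = g i) → P f → P g) :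
    μ {ω | P (fun i => X i ω)} = patCount s P * (1 / 2 : ENNReal) ^ s.card := by
  classical
  have hset : {ω | P (fun i => X i ω)} =
      ⋃ f ∈ Finset.univ.filter (fun f : {x // x ∈ s} → Bool => P (patExt s f)),
        {ω | ∀ i ∈ s, X i ω = patExt s f i} := by
    ext ω
    simp only [Set.mem_setOf_eq, Set.mem_iUnion, Finset.mem_filter, Finset.mem_univ, true_and,
      exists_prop]
    constructor
    · intro h
      refine ⟨fun x => X x.1 ω, hP _ _ (fun i hi => by simp [patExt, hi]) h,
        fun i hi => by simp [patExt, hi]⟩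
    · rintro ⟨f, hPf, hf⟩
      exact hP (patExt s f) _ (fun i hi => (hf i hi).symm) hPf
  rw [hset, measure_biUnion_finset]
  · rw [Finset.sum_congr rfl fun f _ => hiid s (patExt s f)]
    simp only [Finset.sum_const, nsmul_eq_mul, patCount]
  · intro f hf g hg hfg
    refine Set.disjoint_left.mpr fun ω hωf hωg => hfg ?_
    funext i
    have h1 := hωf i.1 i.2
    have h2 := hωg i.1 i.2
    simp only [patExt, dif_pos i.2] at h1 h2
    rw [← h1, ← h2]
  · intro f hf
    have : {ω | ∀ i ∈ s, X i ω = patExt s f i} = ⋂ i ∈ (s : Set I), (X i) ⁻¹' {patExt s f i} := by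
      ext ω; simp
    rw [this]
    exact MeasurableSet.biInter s.countable_toSet fun i _ => (hX i) (measurableSet_singleton _)

lemma firstOcc_eq_iff {ℓ d : ℕ} (hℓ : 1 ≤ ℓ) (hd : ℓ ≤ d) (e : ℕ → Bool) :
    firstOcc ℓ e = d ↔ (∀ i < ℓ, e (d - ℓ + 1 + i) = decide (i < ℓ - 1)) ∧
      ∀ j, ℓ ≤ j → j < d → ¬ ∀ i < ℓ, e (j - ℓ + 1 + i) = decide (i < ℓ - 1) := by
  unfold firstOcc
  set S := {j | ℓ ≤ j ∧ ∀ i < ℓ, e (j - ℓ + 1 + i) = decide (i < ℓ - 1)} with hS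
  constructor
  · intro h
    have hSne : S.Nonempty := by
      by_contra hemp
      rw [Set.not_nonempty_iff_eq_empty] at hemp
      rw [hemp, Nat.sInf_empty] at h
      omega
    have hmem := Nat.sInf_mem hSne
    rw [h] at hmem
    refine ⟨hmem.2, fun j hj1 hj2 hw => ?_⟩
    have := Nat.sInf_le (show j ∈ S from ⟨hj1, hw⟩)
    omega
  · rintro ⟨h1, h2⟩
    have hd' : d ∈ S := ⟨hd, h1⟩
    refine le_antisymm (Nat.sInf_le hd') (le_csInf ⟨d, hd'⟩ ?_)
    rintro j ⟨hj1, hjw⟩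
    by_contra hlt
    push_neg at hlt
    exact h2 j hj1 (by omega) hjw

lemma measurable_firstOcc_eq {Ω' : Type} [MeasurableSpace Ω'] (ℓ : ℕ)
    (η : ℕ → Ω' → Bool) (hmeas : ∀ i, Measurable (η i)) (d : ℕ) :
    MeasurableSet {ω | firstOcc ℓ (fun i => η i ω) = d} := by
  classical
  have hW : ∀ j : ℕ, MeasurableSet {ω | ℓ ≤ j ∧
      ∀ i < ℓ, η (j - ℓ + 1 + i) ω = decide (i < ℓ - 1)} := by
    intro j
    by_cases hj : ℓ ≤ j
    · have : {ω | ℓ ≤ j ∧ ∀ i < ℓ, η (j - ℓ + 1 + i) ω = decide (i < ℓ - 1)} =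
          ⋂ i ∈ Finset.range ℓ, (η (j - ℓ + 1 + i)) ⁻¹' {decide (i < ℓ - 1)} := by
        ext ω; simp [hj]
      rw [this]
      exact MeasurableSet.biInter (Finset.range ℓ).countable_toSet
        fun i _ => (hmeas _) (measurableSet_singleton _)
    · have : {ω | ℓ ≤ j ∧ ∀ i < ℓ, η (j - ℓ + 1 + i) ω = decide (i < ℓ - 1)} = ∅ := by
        ext ω; simp [hj]
      rw [this]; exact MeasurableSet.empty
  have hchar : ∀ ω, firstOcc ℓ (fun i => η i ω) = d ↔
      ((d ∈ {j | ℓ ≤ j ∧ ∀ i < ℓ, η (j - ℓ + 1 + i) ω = decide (i < ℓ - 1)} ∧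
        ∀ j < d, j ∉ {j | ℓ ≤ j ∧ ∀ i < ℓ, η (j - ℓ + 1 + i) ω = decide (i < ℓ - 1)}) ∨
       (d = 0 ∧ ∀ j, j ∉ {j | ℓ ≤ j ∧ ∀ i < ℓ, η (j - ℓ + 1 + i) ω = decide (i < ℓ - 1)})) := by
    intro ω
    set S := {j | ℓ ≤ j ∧ ∀ i < ℓ, η (j - ℓ + 1 + i) ω = decide (i < ℓ - 1)} with hSdef
    unfold firstOcc
    have hfix : {j | ℓ ≤ j ∧ ∀ i < ℓ, (fun i => η i ω) (j - ℓ + 1 + i) = decide (i < ℓ - 1)} = S := rfl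
    rw [hfix]
    constructor
    · intro h
      rcases Set.eq_empty_or_nonempty S with hemp | hne
      · right
        rw [hemp, Nat.sInf_empty] at h
        exact ⟨h.symm, by rw [hemp]; simp⟩
      · left
        have hmem := Nat.sInf_mem hne
        rw [h] at hmem
        exact ⟨hmem, fun j hj hjS => by have := Nat.sInf_le hjS; omega⟩
    · rintro (⟨hmem, hmin⟩ | ⟨rfl, hemp⟩)
      · refine le_antisymm (Nat.sInf_le hmem) (le_csInf ⟨d, hmem⟩ ?_)
        intro j hjS
        by_contra hlt
        exact hmin j (by omega) hjS
      · have : S = ∅ := Set.eq_empty_iff_forall_notMem.mpr hemp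
        rw [this, Nat.sInf_empty]
  have : {ω | firstOcc ℓ (fun i => η i ω) = d} =
      (({ω | ℓ ≤ d ∧ ∀ i < ℓ, η (d - ℓ + 1 + i) ω = decide (i < ℓ - 1)} ∩
        ⋂ j ∈ Finset.range d, {ω | ℓ ≤ j ∧ ∀ i < ℓ, η (j - ℓ + 1 + i) ω = decide (i < ℓ - 1)}ᶜ) ∪
       (if d = 0 then ⋂ j : ℕ, {ω | ℓ ≤ j ∧ ∀ i < ℓ, η (j - ℓ + 1 + i) ω = decide (i < ℓ - 1)}ᶜ
        else ∅)) := by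
    ext ω
    rw [Set.mem_setOf_eq, hchar ω]
    by_cases hd0 : d = 0 <;>
      simp [hd0, Set.mem_iInter, Set.mem_setOf_eq, Finset.mem_range]
  rw [this]
  refine MeasurableSet.union ((hW d).inter (MeasurableSet.biInter
    (Finset.range d).countable_toSet fun j _ => (hW j).compl)) ?_
  split
  · exact MeasurableSet.iInter fun j => (hW j).compl
  · exact MeasurableSet.empty

theorem stmt3 {Ω Ω' : Type} [MeasurableSpace Ω] [MeasurableSpace Ω']
    (μ : Measure Ω) (μ' : Measure Ω') [IsProbabilityMeasure μ] [IsProbabilityMeasure μ']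
    (ℓ : ℕ) (hℓ : 1 ≤ ℓ)
    (env : ℤ → Ω → Bool) (η : ℕ → Ω' → Bool)
    (hmeas_env : ∀ i, Measurable (env i)) (hmeas : ∀ i, Measurable (η i))
    (hiid_env : ∀ (s : Finset ℤ) (b : ℤ → Bool),
      μ {ω | ∀ i ∈ s, env i ω = b i} = (1 / 2 : ENNReal) ^ s.card)
    (hiid : ∀ (s : Finset ℕ) (b : ℕ → Bool),
      μ' {ω | ∀ i ∈ s, η i ω = b i} = (1 / 2 : ENNReal) ^ s.card)
    (J : Finset ℕ) (hJ : J.Nonempty) :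
    μ {ω | ∃ b b' : ℤ, occEnd ℓ (fun t => env t ω) b ∧ occEnd ℓ (fun t => env t ω) b' ∧
        b ≤ 0 ∧ 0 < b' ∧ (∀ c, b < c → c < b' → ¬ occEnd ℓ (fun t => env t ω) c) ∧
        (b' - b).toNat ∈ J}
      ≤ (1 / 2 : ENNReal) ^ ℓ * (J.max' hJ) *
          μ' {ω | firstOcc ℓ (fun i => η i ω) ∈ J} := by
  classical
  set A : ℕ → Set Ω' := fun d => {ω | firstOcc ℓ (fun i => η i ω) = d} with hA
  have hterm : ∀ d ∈ J, ∀ b ∈ Finset.Ioc (-(d : ℤ)) 0,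
      μ {ω | Qz ℓ b d (fun t => env t ω)} ≤ (1 / 2 : ENNReal) ^ ℓ * μ' (A d) := by
    intro d hd b hb
    rw [Finset.mem_Ioc] at hb
    have hd1 : 1 ≤ d := by omega
    by_cases hdℓ : ℓ ≤ d
    · have hmuE : μ {ω | Qz ℓ b d (fun t => env t ω)} =
          patCount (Finset.Icc (b - ℓ + 1) (b + d)) (Qz ℓ b d) * (1 / 2 : ENNReal) ^ (ℓ + d) := by
        rw [cyl_count' μ env hmeas_env hiid_env (Finset.Icc (b - ℓ + 1) (b + d)) (Qz ℓ b d)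
          (Qz_of_agree hℓ)]
        congr 2
        rw [Int.card_Icc]
        omega
      have hmuA : μ' (A d) = patCount (Finset.Icc (1 : ℕ) d) (Pn ℓ d) * (1 / 2 : ENNReal) ^ d := by
        have hseteq : A d = {ω | Pn ℓ d (fun i => η i ω)} := by
          ext ω
          exact firstOcc_eq_iff hℓ hdℓ _
        rw [hseteq, cyl_count' μ' η hmeas hiid _ _ (Pn_of_agree hℓ hdℓ)]
        congr 2
        rw [Nat.card_Icc]
        omega
      rw [hmuE, hmuA, patCount_corr hℓ b hdℓ, pow_add]
      apply le_of_eq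
      ring
    · have hempty : {ω | Qz ℓ b d (fun t => env t ω)} = ∅ := by
        ext ω
        simp only [Set.mem_empty_iff_false, iff_false, Set.mem_setOf_eq]
        rintro ⟨h1, h2, -⟩
        exact overlap hℓ h1 h2 (by omega) (by omega)
      rw [hempty, measure_empty]
      exact zero_le
  have hcover : {ω | ∃ b b' : ℤ, occEnd ℓ (fun t => env t ω) b ∧ occEnd ℓ (fun t => env t ω) b' ∧
        b ≤ 0 ∧ 0 < b' ∧ (∀ c, b < c → c < b' → ¬ occEnd ℓ (fun t => env t ω) c) ∧
        (b' - b).toNat ∈ J} ⊆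
      ⋃ d ∈ J, ⋃ b ∈ Finset.Ioc (-(d : ℤ)) 0, {ω | Qz ℓ b d (fun t => env t ω)} := by
    rintro ω ⟨b, b', h1, h2, h3, h4, h5, h6⟩
    simp only [Set.mem_iUnion, exists_prop, Set.mem_setOf_eq]
    have hb' : b + (((b' - b).toNat : ℕ) : ℤ) = b' := by omega
    refine ⟨(b' - b).toNat, h6, b, ?_, h1, by rw [hb']; exact h2,
      fun c hc1 hc2 => h5 c hc1 (by rw [hb'] at hc2; exact hc2)⟩
    rw [Finset.mem_Ioc]
    omega
  have hdisj : ((J : Set ℕ)).PairwiseDisjoint A := by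
    intro d _ d' _ hne
    refine Set.disjoint_left.mpr fun ω h h' => hne ?_
    rw [← h, ← h']
  have hmeasA : ∀ d ∈ J, MeasurableSet (A d) := fun d _ => measurable_firstOcc_eq ℓ η hmeas d
  have hcard : ∀ d : ℕ, (Finset.Ioc (-(d : ℤ)) 0).card = d := by
    intro d
    rw [Int.card_Ioc]
    omega
  calc μ {ω | ∃ b b' : ℤ, occEnd ℓ (fun t => env t ω) b ∧ occEnd ℓ (fun t => env t ω) b' ∧
        b ≤ 0 ∧ 0 < b' ∧ (∀ c, b < c → c < b' → ¬ occEnd ℓ (fun t => env t ω) c) ∧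
        (b' - b).toNat ∈ J}
      ≤ ∑ d ∈ J, ∑ b ∈ Finset.Ioc (-(d : ℤ)) 0, μ {ω | Qz ℓ b d (fun t => env t ω)} := by
        refine le_trans (measure_mono hcover) ?_
        refine le_trans (measure_biUnion_finset_le J _) (Finset.sum_le_sum fun d _ => ?_)
        exact measure_biUnion_finset_le _ _
    _ ≤ ∑ d ∈ J, ∑ _b ∈ Finset.Ioc (-(d : ℤ)) 0, (1 / 2 : ENNReal) ^ ℓ * μ' (A d) :=
        Finset.sum_le_sum fun d hd => Finset.sum_le_sum fun b hb => hterm d hd b hb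
    _ = ∑ d ∈ J, (d : ENNReal) * ((1 / 2 : ENNReal) ^ ℓ * μ' (A d)) := by
        refine Finset.sum_congr rfl fun d hd => ?_
        rw [Finset.sum_const, nsmul_eq_mul, hcard d]
    _ ≤ ∑ d ∈ J, ((J.max' hJ : ℕ) : ENNReal) * ((1 / 2 : ENNReal) ^ ℓ * μ' (A d)) :=
        Finset.sum_le_sum fun d hd =>
          mul_le_mul_left (by exact_mod_cast Nat.cast_le.mpr (J.le_max' d hd)) _
    _ = (1 / 2 : ENNReal) ^ ℓ * (J.max' hJ) * ∑ d ∈ J, μ' (A d) := by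
        rw [Finset.mul_sum]
        refine Finset.sum_congr rfl fun d hd => ?_
        ring
    _ = (1 / 2 : ENNReal) ^ ℓ * (J.max' hJ) * μ' {ω | firstOcc ℓ (fun i => η i ω) ∈ J} := by
        rw [← measure_biUnion_finset hdisj hmeasA]
        have huni : (⋃ d ∈ J, A d) = {ω | firstOcc ℓ (fun i => η i ω) ∈ J} := by
          ext ω
          simp [hA]
        rw [huni]
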